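/- Let K ⊆ ℝ^d be a centrally-symmetric convex set of dimension d' with K°_ℤ = {0} and with finite positive d'-dimensional volume Vol(K). Then |K_ℤ| · Vol(K) ≤ Vol(3K) = 3^{d'} · Vol(K); in particular |K_ℤ| ≤ 3^{d'}. -/

import Mathlib

open Set
open scoped Pointwise

noncomputable section

/-- Coordinatewise cast of an integer vector into `ℝ^d`. -/
def ic {d : ℕ} (v : Fin d → ℤ) : Fin d → ℝ := fun i => (v i : ℝ)

/-- `K_ℤ`: the set of lattice points of `ℤ^d` lying in `K`. -/
def latticePts {d : ℕ} (K : Set (Fin d → ℝ)) : Set (Fin d → ℤ) := {x | ic x ∈ K}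

/-- `K°_ℤ`: the set of lattice points of `ℤ^d` lying in the relative interior of `K`. -/
def relintLatticePts {d : ℕ} (K : Set (Fin d → ℝ)) : Set (Fin d → ℤ) :=
  {x | ic x ∈ intrinsicInterior ℝ K}
open MeasureTheory
open scoped NNReal ENNReal

theorem intrinsic_eq_interior' {V : Type*} [NormedAddCommGroup V] [NormedSpace ℝ V]
    {t : Set V} (h : affineSpan ℝ t = ⊤) : intrinsicInterior ℝ t = interior t := by
  refine Subset.antisymm ?_ interior_subset_intrinsicInterior
  have hopen : IsOpenMap ((↑) : affineSpan ℝ t → V) := by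
    have h1 : IsOpen ((affineSpan ℝ t : Set V)) := by rw [h]; simp
    exact h1.isOpenMap_subtype_val
  rintro x ⟨y, hy, rfl⟩
  have h2 : IsOpen (((↑) : affineSpan ℝ t → V) '' interior ((↑) ⁻¹' t)) :=
    hopen _ isOpen_interior
  have h3 : (((↑) : affineSpan ℝ t → V) '' interior ((↑) ⁻¹' t)) ⊆ t := by
    rintro w ⟨z, hz, hzw⟩
    subst hzw
    have h4 : z ∈ (((↑) : affineSpan ℝ t → V) ⁻¹' t) := interior_subset hz
    exact h4
  exact interior_maximal h3 h2 ⟨y, hy, rfl⟩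

/-- Volume form of Minkowski's bound: if `K` is a centrally-symmetric convex set of
    dimension `d'` with `K°_ℤ = {0}` and finite positive `d'`-dimensional volume, then
    `|K_ℤ| ⬝ Vol(K) ≤ Vol(3K) = 3^{d'} ⬝ Vol(K)`; in particular `|K_ℤ| ≤ 3^{d'}`. -/
theorem card_latticePts_mul_volume_le {d : ℕ} (K : Set (Fin d → ℝ))
    (hconv : Convex ℝ K) (hsym : K = -K)
    (hint : relintLatticePts K = {0})
    (d' : ℕ) (hd' : d' = Module.finrank ℝ (vectorSpan ℝ K))
    (hvolpos : 0 < μH[(d' : ℝ)] K) (hvolfin : μH[(d' : ℝ)] K < ⊤) :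
    ((latticePts K).ncard : ENNReal) * μH[(d' : ℝ)] K ≤ μH[(d' : ℝ)] ((3 : ℝ) • K) ∧
    μH[(d' : ℝ)] ((3 : ℝ) • K) = (3 : ENNReal) ^ d' * μH[(d' : ℝ)] K ∧
    (latticePts K).Finite ∧ (latticePts K).ncard ≤ 3 ^ d' := by
  classical
  -- basic facts about K
  have hKne : K.Nonempty := by
    rcases K.eq_empty_or_nonempty with h | h
    · exfalso; rw [h] at hvolpos; simp at hvolpos
    · exact h
  have hnegmem : ∀ {p : Fin d → ℝ}, p ∈ K → -p ∈ K := by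
    intro p hp
    rw [hsym]
    exact Set.neg_mem_neg.mpr hp
  have hK0 : (0 : Fin d → ℝ) ∈ K := by
    obtain ⟨p, hp⟩ := hKne
    have h2 := hconv hp (hnegmem hp) (by norm_num : (0:ℝ) ≤ 1/2)
      (by norm_num : (0:ℝ) ≤ 1/2) (by norm_num)
    simpa [smul_neg] using h2
  -- the span of K as a submodule, and the preimage of K in it
  set E : Submodule ℝ (Fin d → ℝ) := Submodule.span ℝ K with hE
  have hKE : K ⊆ (E : Set (Fin d → ℝ)) := Submodule.subset_span
  set s : Set E := (((↑) : E → (Fin d → ℝ)) ⁻¹' K) with hsdef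
  have hsconv : Convex ℝ s := hconv.linear_preimage E.subtype
  have h0s : (0 : E) ∈ s := by
    show ((0 : E) : Fin d → ℝ) ∈ K
    simpa using hK0
  have hcoeneg : ∀ z : E, (((-1:ℝ) • z : E) : Fin d → ℝ) = -(z : Fin d → ℝ) := by
    intro z
    push_cast
    module
  have hs2 : (-1:ℝ) • s = s := by
    ext z
    constructor
    · rintro ⟨w, hw, rfl⟩
      show ((((-1:ℝ) • w) : E) : Fin d → ℝ) ∈ K
      rw [hcoeneg]
      exact hnegmem hw
    · intro hz
      refine ⟨(-1:ℝ) • z, ?_, by module⟩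
      show ((((-1:ℝ) • z) : E) : Fin d → ℝ) ∈ K
      rw [hcoeneg]
      exact hnegmem hz
  have hsneg : ∀ {x : E}, x ∈ interior s → -x ∈ interior s := by
    intro x hx
    have h3 : -x ∈ interior ((-1:ℝ) • s) := by
      rw [interior_smul₀ (by norm_num : (-1:ℝ) ≠ 0)]
      exact ⟨x, hx, by module⟩
    rwa [hs2] at h3
  -- affine span of s is everything
  have hspan : affineSpan ℝ s = ⊤ := by
    rw [AffineSubspace.affineSpan_eq_top_iff_vectorSpan_eq_top_of_nonempty ℝ E E ⟨0, h0s⟩]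
    have h1 : Submodule.span ℝ s = ⊤ := Submodule.span_span_coe_preimage
    rw [eq_top_iff, ← h1]
    apply Submodule.span_le.mpr
    intro x hx
    rw [SetLike.mem_coe, vectorSpan_def]
    exact Submodule.subset_span ⟨x, hx, 0, h0s, by simp⟩
  -- transporting the intrinsic interior
  have hBimg : intrinsicInterior ℝ K = ((↑) : E → (Fin d → ℝ)) '' interior s := by
    have himg : (E.subtypeₗᵢ.toAffineIsometry) '' s = K := by
      ext z
      constructor
      · rintro ⟨w, hw, rfl⟩; exact hw
      · intro hz; exact ⟨⟨z, hKE hz⟩, hz, rfl⟩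
    calc intrinsicInterior ℝ K
        = intrinsicInterior ℝ ((E.subtypeₗᵢ.toAffineIsometry) '' s) := by rw [himg]
      _ = (E.subtypeₗᵢ.toAffineIsometry) '' intrinsicInterior ℝ s :=
          AffineIsometry.image_intrinsicInterior _ s
      _ = ((↑) : E → (Fin d → ℝ)) '' interior s := by rw [intrinsic_eq_interior' hspan]; rfl
  set B : Set (Fin d → ℝ) := intrinsicInterior ℝ K with hBdef
  have hBK : B ⊆ K := intrinsicInterior_subset
  -- 0 is in the interior of s
  have h0int : (0 : E) ∈ interior s := by
    obtain ⟨z0, hz0mem⟩ := Set.Nonempty.intrinsicInterior hconv hKne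
    rw [← hBdef, hBimg] at hz0mem
    obtain ⟨z, hz, hzeq⟩ := hz0mem
    have h1 : -z ∈ s := interior_subset (hsneg hz)
    have h2 := hsconv.combo_interior_self_mem_interior hz h1
      (by norm_num : (0:ℝ) < 1/2) (by norm_num : (0:ℝ) ≤ 1/2) (by norm_num)
    simpa [smul_neg] using h2
  -- measurability of B
  have hBmeas : MeasurableSet B := by
    obtain ⟨W, hW, hpre⟩ := isOpen_induced_iff.mp (isOpen_interior (s := s))
    have himg2 : ((↑) : E → (Fin d → ℝ)) '' interior s = W ∩ (E : Set (Fin d → ℝ)) := by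
      rw [← hpre]
      ext z
      constructor
      · rintro ⟨w, hw, rfl⟩; exact ⟨hw, w.2⟩
      · rintro ⟨h1, h2⟩; exact ⟨⟨z, h2⟩, h1, rfl⟩
    rw [hBimg, himg2]
    exact hW.measurableSet.inter E.closed_of_finiteDimensional.measurableSet
  -- scaled copies lie in the intrinsic interior
  have hscale : ∀ (c : ℝ), 0 ≤ c → c < 1 → ∀ k ∈ K, c • k ∈ B := by
    intro c hc0 hc1 k hk
    have hkE : (⟨k, hKE hk⟩ : E) ∈ s := hk
    have h2 := hsconv.combo_self_interior_mem_interior hkE h0int hc0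
      (by linarith : (0:ℝ) < 1 - c) (by ring)
    rw [hBimg]
    exact ⟨c • ⟨k, hKE hk⟩, by simpa using h2, by simp⟩
  -- "midpoint" property of B
  have hmid : ∀ a ∈ B, ∀ b ∈ B, (2⁻¹ : ℝ) • b + (2⁻¹ : ℝ) • (-a) ∈ B := by
    intro a ha b hb
    rw [hBimg] at ha hb ⊢
    obtain ⟨a', ha', rfl⟩ := ha
    obtain ⟨b', hb', rfl⟩ := hb
    have h1 : -a' ∈ interior s := hsneg ha'
    have h3 := hsconv.interior hb' h1 (by norm_num : (0:ℝ) ≤ 2⁻¹)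
      (by norm_num : (0:ℝ) ≤ 2⁻¹) (by norm_num)
    exact ⟨_, h3, by simp⟩
  -- the translated pieces
  set T : (Fin d → ℤ) → Set (Fin d → ℝ) := fun x => ((2:ℝ) • ic x) +ᵥ B with hTdef
  have hTmeas : ∀ x, MeasurableSet (T x) := fun x => hBmeas.const_vadd _
  have hTvol : ∀ x, μH[(d':ℝ)] (T x) = μH[(d':ℝ)] B := fun x =>
    hausdorffMeasure_vadd _ (Or.inl (by positivity)) _
  have hTsub : ∀ x ∈ latticePts K, T x ⊆ (3:ℝ) • K := by
    intro x hx z hz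
    obtain ⟨a, ha, rfl⟩ := hz
    have hk : ((2/3:ℝ)) • ic x + (1/3:ℝ) • a ∈ K :=
      hconv hx (hBK ha) (by norm_num) (by norm_num) (by norm_num)
    show ((2:ℝ) • ic x) +ᵥ a ∈ (3:ℝ) • K
    have heq : ((2:ℝ) • ic x) +ᵥ a = (3:ℝ) • ((2/3:ℝ) • ic x + (1/3:ℝ) • a) := by
      show (2:ℝ) • ic x + a = _
      module
    rw [heq]
    exact Set.smul_mem_smul_set hk
  have hTdisj : ∀ x y : Fin d → ℤ, x ≠ y → Disjoint (T x) (T y) := by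
    intro x y hxy
    rw [Set.disjoint_left]
    rintro z ⟨a, ha, rfl⟩ ⟨b, hb, hEq⟩
    have h : (2:ℝ) • ic y + b = (2:ℝ) • ic x + a := hEq
    have hx2 : ic (x - y) = (2⁻¹:ℝ) • b + (2⁻¹:ℝ) • (-a) := by
      have hxy2 : ic (x - y) = ic x - ic y := by
        funext i
        simp only [ic, Pi.sub_apply]
        push_cast
        ring
      have h2 : a = (2:ℝ) • ic y + b - (2:ℝ) • ic x := by rw [h]; module
      rw [hxy2, h2]; module
    have hmem : (x - y) ∈ relintLatticePts K := by
      show ic (x - y) ∈ intrinsicInterior ℝ K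
      rw [hx2]
      exact hmid a ha b hb
    rw [hint, Set.mem_singleton_iff, sub_eq_zero] at hmem
    exact hxy hmem
  -- the key finite estimate
  have key1 : ∀ (F : Finset (Fin d → ℤ)), ↑F ⊆ latticePts K → ∀ r : ℝ≥0, 0 < r → r < 1 →
      (F.card : ℝ≥0∞) * ((r : ℝ≥0∞) ^ d' * μH[(d':ℝ)] K) ≤ μH[(d':ℝ)] ((3:ℝ) • K) := by
    intro F hF r hr0 hr1
    have hrne : ((r:ℝ)) ≠ 0 := by exact_mod_cast hr0.ne'
    have hrK : μH[(d':ℝ)] ((r:ℝ) • K) = (r:ℝ≥0∞)^d' * μH[(d':ℝ)] K := by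
      rw [Measure.hausdorffMeasure_smul₀ (by positivity) hrne K]
      have hnn : ‖(r:ℝ)‖₊ = r := by
        ext; simp [Real.norm_of_nonneg r.coe_nonneg]
      rw [hnn, NNReal.rpow_natCast, ENNReal.smul_def, ENNReal.coe_pow]
      rfl
    calc (F.card : ℝ≥0∞) * ((r:ℝ≥0∞)^d' * μH[(d':ℝ)] K)
        = ∑ _x ∈ F, (r:ℝ≥0∞)^d' * μH[(d':ℝ)] K := by
          rw [Finset.sum_const, nsmul_eq_mul]
      _ ≤ ∑ x ∈ F, μH[(d':ℝ)] (T x) := by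
          refine Finset.sum_le_sum (fun x _ => ?_)
          rw [hTvol x, ← hrK]
          refine measure_mono ?_
          rintro _ ⟨k, hk, rfl⟩
          exact hscale _ r.coe_nonneg (by exact_mod_cast hr1) k hk
      _ = μH[(d':ℝ)] (⋃ x ∈ F, T x) :=
          (measure_biUnion_finset (fun x _ y _ hxy => hTdisj x y hxy) (fun x _ => hTmeas x)).symm
      _ ≤ μH[(d':ℝ)] ((3:ℝ) • K) :=
          measure_mono (Set.iUnion₂_subset fun x hx => hTsub x (hF hx))
  -- K is contained in 3 • K
  have hK3 : K ⊆ (3:ℝ) • K := by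
    intro k hk
    have hk' : (1/3:ℝ) • k + (2/3:ℝ) • (0 : Fin d → ℝ) ∈ K :=
      hconv hk hK0 (by norm_num) (by norm_num) (by norm_num)
    have heq : k = (3:ℝ) • ((1/3:ℝ) • k + (2/3:ℝ) • (0 : Fin d → ℝ)) := by module
    rw [heq]
    exact Set.smul_mem_smul_set hk'
  have hM0 : μH[(d':ℝ)] ((3:ℝ) • K) ≠ 0 := (lt_of_lt_of_le hvolpos (measure_mono hK3)).ne'
  -- removing the factor r by a pinching argument
  have key2 : ∀ (F : Finset (Fin d → ℤ)), ↑F ⊆ latticePts K →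
      (F.card : ℝ≥0∞) * μH[(d':ℝ)] K ≤ μH[(d':ℝ)] ((3:ℝ) • K) := by
    intro F hF
    by_contra hcon
    push_neg at hcon
    rcases Nat.eq_zero_or_pos d' with h0 | hd0
    · subst h0
      have h := key1 F hF 2⁻¹ (by exact_mod_cast (by norm_num : ((0:ℝ)) < 2⁻¹))
        (by exact_mod_cast (by norm_num : ((2:ℝ))⁻¹ < 1))
      simp only [pow_zero, one_mul] at h
      exact absurd h hcon.not_ge
    set X := (F.card : ℝ≥0∞) * μH[(d':ℝ)] K with hXdef
    set M := μH[(d':ℝ)] ((3:ℝ) • K) with hMdef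
    have hXtop : X ≠ ⊤ := ENNReal.mul_ne_top (ENNReal.natCast_ne_top _) hvolfin.ne
    have hX0 : X ≠ 0 := (lt_of_le_of_lt (zero_le : 0 ≤ M) hcon).ne'
    have hMtop : M ≠ ⊤ := (hcon.trans_le le_top).ne
    set q : ℝ≥0 := (M / X).toNNReal with hqdef
    have hdivtop : M / X ≠ ⊤ := by
      rw [div_eq_mul_inv]
      exact ENNReal.mul_ne_top hMtop (ENNReal.inv_ne_top.mpr hX0)
    have hqcoe : (q : ℝ≥0∞) = M / X := ENNReal.coe_toNNReal hdivtop
    have hq1 : q < 1 := by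
      have hlt : M / X < 1 := by
        rw [ENNReal.div_lt_iff (Or.inl hX0) (Or.inl hXtop), one_mul]
        exact hcon
      rw [← hqcoe] at hlt
      exact_mod_cast hlt
    have hq0 : 0 < q := by
      have hpos : 0 < M / X := ENNReal.div_pos hM0 hXtop
      rw [← hqcoe] at hpos
      exact_mod_cast hpos
    set r : ℝ≥0 := q ^ (((d':ℝ) + 1)⁻¹) with hrdef
    have he0 : (0:ℝ) < ((d':ℝ) + 1)⁻¹ := by positivity
    have hr0 : 0 < r := NNReal.rpow_pos hq0
    have hr1 : r < 1 := NNReal.rpow_lt_one hq1 he0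
    have hrd : q < r ^ d' := by
      have h1 : r ^ d' = q ^ ((((d':ℝ) + 1)⁻¹) * (d' : ℝ)) := by
        rw [hrdef, ← NNReal.rpow_natCast (q ^ (((d':ℝ) + 1)⁻¹)) d', ← NNReal.rpow_mul]
      have h2 : (((d':ℝ) + 1)⁻¹) * (d' : ℝ) < 1 := by
        rw [inv_mul_eq_div, div_lt_one (by positivity)]
        linarith
      calc q = q ^ (1:ℝ) := (NNReal.rpow_one q).symm
        _ < q ^ ((((d':ℝ) + 1)⁻¹) * (d' : ℝ)) :=
            NNReal.rpow_lt_rpow_of_exponent_gt hq0 hq1 h2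
        _ = r ^ d' := h1.symm
    have hXeq : (q:ℝ≥0∞) * X = M := by
      rw [hqcoe]
      exact ENNReal.div_mul_cancel hX0 hXtop
    have hlt2 : M < (r:ℝ≥0∞)^d' * X := by
      rw [← hXeq]
      refine (ENNReal.mul_lt_mul_iff_left hX0 hXtop).mpr ?_
      exact_mod_cast hrd
    have hle2 : (r:ℝ≥0∞)^d' * X ≤ M := by
      calc (r:ℝ≥0∞)^d' * X = (F.card:ℝ≥0∞) * ((r:ℝ≥0∞)^d' * μH[(d':ℝ)] K) := by
            rw [hXdef]; ring
        _ ≤ M := key1 F hF r hr0 hr1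
    exact absurd (hlt2.trans_le hle2) (lt_irrefl M)
  -- the volume of 3 • K
  have hpart2 : μH[(d':ℝ)] ((3:ℝ) • K) = (3:ℝ≥0∞)^d' * μH[(d':ℝ)] K := by
    rw [Measure.hausdorffMeasure_smul₀ (by positivity) (by norm_num : (3:ℝ) ≠ 0) K]
    have h3 : ‖(3:ℝ)‖₊ = 3 := by
      ext; simp [Real.norm_of_nonneg]
    rw [h3, NNReal.rpow_natCast, ENNReal.smul_def, ENNReal.coe_pow]
    norm_num
  -- cardinality bound for finite subsets
  have hcardle : ∀ F : Finset (Fin d → ℤ), ↑F ⊆ latticePts K → F.card ≤ 3 ^ d' := by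
    intro F hF
    have h := key2 F hF
    rw [hpart2] at h
    have h2 : (F.card : ℝ≥0∞) ≤ (3:ℝ≥0∞)^d' := by
      rw [← ENNReal.mul_le_mul_iff_left hvolpos.ne' hvolfin.ne]
      exact h
    have h3 : ((F.card : ℕ) : ℝ≥0∞) ≤ ((3^d' : ℕ) : ℝ≥0∞) := by
      push_cast
      exact h2
    exact_mod_cast h3
  -- finiteness
  have hfin : (latticePts K).Finite := by
    by_contra hinf
    obtain ⟨F, hFsub, hFcard⟩ :=
      Set.Infinite.exists_subset_card_eq (hinf : (latticePts K).Infinite) (3 ^ d' + 1)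
    have := hcardle F hFsub
    omega
  refine ⟨?_, hpart2, hfin, ?_⟩
  · have hcoe : ↑hfin.toFinset ⊆ latticePts K := by rw [hfin.coe_toFinset]
    have h := key2 hfin.toFinset hcoe
    rwa [Set.ncard_eq_toFinset_card (latticePts K) hfin]
  · have hcoe : ↑hfin.toFinset ⊆ latticePts K := by rw [hfin.coe_toFinset]
    have h := hcardle hfin.toFinset hcoe
    rwa [Set.ncard_eq_toFinset_card (latticePts K) hfin]
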